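/- arXiv:1605.04160 — 4 statements merged into one kernel-verified Lean document; each statement's English description precedes it below -/
import Mathlib

section
/- Let h ≥ 1 and 1 ≤ k ≤ h. Then the quantity (2h³ - 2h + 3k² + 3k) / (3h² - 3h + 6k), which is the average number of comparisons to search for a present key in a lattice of height h with k proper keys on diagonal h+2 using SearchLDS, is at most h. -/
/-- For `h ≥ 1` and `1 ≤ k ≤ h`, the average number of comparisons
`(2h³ - 2h + 3k² + 3k)/(3h² - 3h + 6k)` of SearchLDS for a present key
is at most `h`. -/
theorem searchLDS_average_comparisons_le (h k : ℕ) (hh : 1 ≤ h) (hk1 : 1 ≤ k) (hkh : k ≤ h) :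
    (2 * (h : ℝ) ^ 3 - 2 * h + 3 * (k : ℝ) ^ 2 + 3 * k) /
      (3 * (h : ℝ) ^ 2 - 3 * h + 6 * k) ≤ h := by
  have hh' : (1 : ℝ) ≤ h := by exact_mod_cast hh
  have hk1' : (1 : ℝ) ≤ k := by exact_mod_cast hk1
  have hkh' : (k : ℝ) ≤ h := by exact_mod_cast hkh
  have hden : (0 : ℝ) < 3 * (h : ℝ) ^ 2 - 3 * h + 6 * k := by nlinarith
  rw [div_le_iff₀ hden]
  nlinarith [mul_nonneg (mul_nonneg (sub_nonneg.2 hh') (by linarith : (0:ℝ) ≤ (h:ℝ))) (by nlinarith : (0:ℝ) ≤ (h:ℝ) - 2 + 1), mul_nonneg (by linarith : (0:ℝ) ≤ (k:ℝ)) (by linarith : (0:ℝ) ≤ 2*(h:ℝ) - k - 1)]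
end

section
/- Let h ≥ 1 and 1 ≤ k ≤ h. Then (2h³ - 2h + 3k² + 3k)/(3h² - 3h + 6k) ≥ (h-1)/3, i.e., the average number of comparisons of SearchLDS for present keys is at least (h-1)/3 (so it is Θ(h)). -/
/-- For `h ≥ 1` and `1 ≤ k ≤ h`, the average number of comparisons
`(2h³ - 2h + 3k² + 3k)/(3h² - 3h + 6k)` of SearchLDS for a present key
is at least `(h-1)/3`. -/
theorem searchLDS_average_comparisons_ge (h k : ℕ) (hh : 1 ≤ h) (hk1 : 1 ≤ k) (hkh : k ≤ h) :
    ((h : ℝ) - 1) / 3 ≤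
      (2 * (h : ℝ) ^ 3 - 2 * h + 3 * (k : ℝ) ^ 2 + 3 * k) /
        (3 * (h : ℝ) ^ 2 - 3 * h + 6 * k) := by
  have hh' : (1 : ℝ) ≤ h := by exact_mod_cast hh
  have hk1' : (1 : ℝ) ≤ k := by exact_mod_cast hk1
  have hkh' : (k : ℝ) ≤ h := by exact_mod_cast hkh
  have hd : (0 : ℝ) < 3 * (h : ℝ) ^ 2 - 3 * h + 6 * k := by nlinarith
  rw [div_le_div_iff₀ (by norm_num) hd]
  nlinarith [sq_nonneg ((h:ℝ) - k), sq_nonneg ((h:ℝ) + k), sq_nonneg ((h:ℝ) - 1)]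
end

section
/- Let L be an α-sorted lattice (3 ≤ α ≤ h). If K is a present key whose search path ends on a diagonal s < α + 2, then the search path of K has the form D^a d^b for some a, b ≥ 0, and hence J(K) ≤ 2. -/
open scoped Classical

/-- The number of maximal runs (blocks of consecutive equal letters) of a word. -/
def numRuns (w : List Bool) : ℕ := (w.destutter (· ≠ ·)).length

/-- A lattice data structure of height `h`.  The cell on row `r` and column `c`
(with `1 ≤ r`, `1 ≤ c`, `r + c ≤ h + 4`) holds the value `val r c : ℕ∞`, where
`0` and `⊤` are the improper keys and all other values are proper keys.  The
cell on diagonal `s` and (diagonal-)position `j` is the cell `(s + 1 - j, j)`. -/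
structure LDS (h : ℕ) where
  val : ℕ → ℕ → ℕ∞
  /-- every cell of row one contains `0` -/
  row_one : ∀ c, val 1 c = 0
  /-- every cell of column one contains `0` -/
  col_one : ∀ r, val r 1 = 0
  /-- every cell of diagonal `h + 3` except its head and tail contains `∞` -/
  top_diag : ∀ r c, 2 ≤ r → 2 ≤ c → r + c = h + 4 → val r c = ⊤
  /-- non-boundary cells contain positive keys (proper keys or `∞`) -/
  pos : ∀ r c, 2 ≤ r → 2 ≤ c → r + c ≤ h + 3 → 0 < val r c
  /-- cells on diagonals up to `h + 1` contain proper keys (not `∞`) -/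
  proper_inner : ∀ r c, 2 ≤ r → 2 ≤ c → r + c ≤ h + 2 → val r c ≠ ⊤
  /-- keys increase from left to right along rows -/
  row_mono : ∀ r c, 2 ≤ r → 2 ≤ c → r + (c + 1) ≤ h + 3 → val r c < val r (c + 1)
  /-- keys increase from bottom to top along columns -/
  col_mono : ∀ r c, 2 ≤ r → 2 ≤ c → (r + 1) + c ≤ h + 3 → val r c < val (r + 1) c
  /-- proper keys increase from head to tail along diagonals -/
  diag_mono : ∀ r c, 3 ≤ r → 2 ≤ c → r + c ≤ h + 3 → val (r - 1) (c + 1) ≠ ⊤ →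
      val r c < val (r - 1) (c + 1)

/-- A lattice of height `h` is sorted of degree `α` (`α`-sorted) if for each
`4 ≤ s ≤ α + 2` the first proper key of diagonal `s` (the cell `(s - 1, 2)`)
is greater than the last proper key of diagonal `s - 1` (the cell `(2, s - 2)`). -/
def AlphaSorted (h α : ℕ) (L : LDS h) : Prop :=
  ∀ s, 4 ≤ s → s ≤ α + 2 → L.val 2 (s - 2) < L.val (s - 1) 2

/-- The search path of `SearchLDS` starting at row `r`, column `c`:  the current
cell `C = val r c` is compared with the key `K`; the search stops if `C = K`
or `C = 0`, moves down-right (`d`, recorded as `true`) if `K > C`, and moves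
down (`D`, recorded as `false`) if `K < C`. -/
def searchPath (val : ℕ → ℕ → ℕ∞) (K : ℕ∞) : ℕ → ℕ → List Bool
  | 0, _ => []
  | r + 1, c =>
    if val (r + 1) c = K ∨ val (r + 1) c = 0 then []
    else if val (r + 1) c < K then true :: searchPath val K r (c + 1)
    else false :: searchPath val K r c

/-- The search path of a key `K` with respect to a lattice of height `h`:
`SearchLDS` starts at the second cell of diagonal `h + 2`, i.e. row `h + 1`,
column `2`. -/
def path (h : ℕ) (L : LDS h) (K : ℕ∞) : List Bool :=
  searchPath L.val K (h + 1) 2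

/-- `K` is a present key of `L`: it occupies some non-boundary cell. -/
def Present (h : ℕ) (L : LDS h) (K : ℕ∞) : Prop :=
  ∃ r c, 2 ≤ r ∧ 2 ≤ c ∧ r + c ≤ h + 3 ∧ L.val r c = K

/-- `K` is in the search space of `L`: a positive finite value. -/
def InSearchSpace (K : ℕ∞) : Prop := 0 < K ∧ K ≠ ⊤

/-! ### Auxiliary lemmas -/

/-- Values weakly increase going up a column. -/
lemma LDS.col_chain {h : ℕ} (L : LDS h) :
    ∀ (k a C : ℕ), 2 ≤ a → 2 ≤ C → (a + k) + C ≤ h + 3 →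
      L.val a C ≤ L.val (a + k) C := by
  intro k
  induction k with
  | zero => intro a C _ _ _; exact le_rfl
  | succ k ih =>
    intro a C ha hC hs
    have h1 : L.val a C ≤ L.val (a + k) C := ih a C ha hC (by omega)
    have h2 := L.col_mono (a + k) C (by omega) hC (by omega)
    exact h1.trans h2.le

/-- Values weakly increase going tailward along a diagonal, provided the
tail cell is proper. -/
lemma LDS.diag_chain {h : ℕ} (L : LDS h) :
    ∀ (k b ca : ℕ), 2 ≤ b → 2 ≤ ca → (b + k) + ca ≤ h + 3 →
      L.val b (ca + k) ≠ ⊤ → L.val (b + k) ca ≤ L.val b (ca + k) := by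
  intro k
  induction k with
  | zero => intro b ca _ _ _ _; exact le_rfl
  | succ k ih =>
    intro b ca hb hca hs hne
    have hne' : L.val b (ca + 1 + k) ≠ ⊤ := by
      rwa [show ca + 1 + k = ca + (k + 1) by omega]
    have hih : L.val (b + k) (ca + 1) ≤ L.val b (ca + 1 + k) :=
      ih b (ca + 1) hb (by omega) (by omega) hne'
    have hne2 : L.val (b + k) (ca + 1) ≠ ⊤ := by
      intro e
      rw [e] at hih
      exact hne' (top_le_iff.mp hih)
    have hmono := L.diag_mono (b + k + 1) ca (by omega) hca (by omega)
      (by simpa using hne2)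
    have hlt : L.val (b + (k + 1)) ca < L.val (b + k) (ca + 1) := by
      rw [← Nat.add_assoc]; simpa using hmono
    calc L.val (b + (k + 1)) ca ≤ L.val (b + k) (ca + 1) := hlt.le
      _ ≤ L.val b (ca + 1 + k) := hih
      _ = L.val b (ca + (k + 1)) := by rw [show ca + 1 + k = ca + (k + 1) by omega]

/-- The search invariant: `K` occupies a cell with column `≥ c` and
row + column `≤ d`. -/
def LDS.Inv {h : ℕ} (L : LDS h) (K : ℕ∞) (c d : ℕ) : Prop :=
  ∃ r0 c0, 2 ≤ r0 ∧ c ≤ c0 ∧ r0 + c0 ≤ d ∧ L.val r0 c0 = K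

lemma LDS.inv_true {h : ℕ} (L : LDS h) {K : ℕ∞} {r c : ℕ} (hc : 2 ≤ c)
    (hrc : r + c ≤ h + 3) (hlt : L.val r c < K) (hinv : L.Inv K c (r + c)) :
    L.Inv K (c + 1) (r + c) := by
  obtain ⟨r0, c0, h1, h2, h3, h4⟩ := hinv
  refine ⟨r0, c0, h1, ?_, h3, h4⟩
  by_contra hcon
  have hc0 : c0 = c := by omega
  have hr0 : r0 ≤ r := by omega
  have hchain := L.col_chain (r - r0) r0 c0 h1 (by omega) (by omega)
  rw [show r0 + (r - r0) = r by omega, h4, hc0] at hchain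
  exact absurd (hchain.trans_lt hlt) (lt_irrefl K)

lemma LDS.inv_false {h : ℕ} (L : LDS h) {K : ℕ∞} {r c : ℕ} (hc : 2 ≤ c)
    (hrc : r + c ≤ h + 3) (hKt : K ≠ ⊤) (hgt : K < L.val r c)
    (hinv : L.Inv K c (r + c)) :
    ∃ r0 c0, 2 ≤ r0 ∧ c ≤ c0 ∧ r0 + c0 + 1 ≤ r + c ∧ L.val r0 c0 = K := by
  obtain ⟨r0, c0, h1, h2, h3, h4⟩ := hinv
  refine ⟨r0, c0, h1, h2, ?_, h4⟩
  by_contra hcon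
  have he : r0 + c0 = r + c := by omega
  have hr0 : r0 ≤ r := by omega
  have hchain := L.diag_chain (r - r0) r0 c h1 hc (by omega)
  rw [show r0 + (r - r0) = r by omega, show c + (r - r0) = c0 by omega, h4]
    at hchain
  exact absurd ((hchain hKt).trans_lt hgt) (lt_irrefl _)

/-- Searching for a present key finds it. -/
lemma LDS.search_finds {h : ℕ} (L : LDS h) {K : ℕ∞} (hK0 : 0 < K) (hKt : K ≠ ⊤) :
    ∀ r c, 1 ≤ r → 2 ≤ c → r + c ≤ h + 3 → L.Inv K c (r + c) →
      (searchPath L.val K r c).length < r ∧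
      2 ≤ r - (searchPath L.val K r c).length ∧
      L.val (r - (searchPath L.val K r c).length)
        (c + (searchPath L.val K r c).count true) = K := by
  intro r
  induction r with
  | zero => intro c h1; omega
  | succ r ih =>
    intro c _ hc hrc hinv
    by_cases hstop : L.val (r + 1) c = K ∨ L.val (r + 1) c = 0
    · rw [searchPath, if_pos hstop]
      simp only [List.length_nil, List.count_nil, Nat.sub_zero, Nat.add_zero]
      rcases hstop with hk | h0
      · have h2r : 2 ≤ r + 1 := by
          by_contra hcon
          have hr : r = 0 := by omega
          subst hr
          rw [L.row_one] at hk
          exact absurd hk.symm (ne_of_gt hK0)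
        exact ⟨by omega, h2r, hk⟩
      · exfalso
        rcases Nat.lt_or_ge r 1 with h' | h'
        · obtain ⟨r0, c0, a1, a2, a3, a4⟩ := hinv; omega
        · exact absurd h0 (ne_of_gt (L.pos (r + 1) c (by omega) hc hrc))
    · have hvK : L.val (r + 1) c ≠ K := fun e => hstop (Or.inl e)
      have hv0 : L.val (r + 1) c ≠ 0 := fun e => hstop (Or.inr e)
      have hr1 : 1 ≤ r := by
        by_contra hcon
        have hr : r = 0 := by omega
        subst hr
        exact hv0 (L.row_one c)
      by_cases hlt : L.val (r + 1) c < K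
      · have hinv' : L.Inv K (c + 1) (r + (c + 1)) := by
          have := L.inv_true hc hrc hlt hinv
          rwa [show r + 1 + c = r + (c + 1) by omega] at this
        obtain ⟨g1, g2, g3⟩ := ih (c + 1) hr1 (by omega) (by omega) hinv'
        rw [searchPath, if_neg hstop, if_pos hlt]
        refine ⟨by simpa using Nat.succ_lt_succ g1, ?_, ?_⟩
        · rw [show (r + 1) - (true :: searchPath L.val K r (c + 1)).length
              = r - (searchPath L.val K r (c + 1)).length by simp]
          exact g2
        · rw [show (r + 1) - (true :: searchPath L.val K r (c + 1)).length
              = r - (searchPath L.val K r (c + 1)).length by simp,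
            show c + (true :: searchPath L.val K r (c + 1)).count true
              = (c + 1) + (searchPath L.val K r (c + 1)).count true by
            simp [List.count_cons]; omega]
          exact g3
      · have hgt : K < L.val (r + 1) c := lt_of_le_of_ne (not_lt.mp hlt) hvK.symm
        have hinv' : L.Inv K c (r + c) := by
          obtain ⟨r0, c0, a1, a2, a3, a4⟩ := L.inv_false hc hrc hKt hgt hinv
          exact ⟨r0, c0, a1, a2, by omega, a4⟩
        obtain ⟨g1, g2, g3⟩ := ih c hr1 hc (by omega) hinv'
        rw [searchPath, if_neg hstop, if_neg hlt]
        refine ⟨by simpa using Nat.succ_lt_succ g1, ?_, ?_⟩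
        · rw [show (r + 1) - (false :: searchPath L.val K r c).length
              = r - (searchPath L.val K r c).length by simp]
          exact g2
        · rw [show (r + 1) - (false :: searchPath L.val K r c).length
              = r - (searchPath L.val K r c).length by simp,
            show c + (false :: searchPath L.val K r c).count true
              = c + (searchPath L.val K r c).count true by
            simp [List.count_cons]]
          exact g3

lemma count_true_eq_length {q : List Bool} (hq : q.count false = 0) :
    q.count true = q.length := by
  have hmem : false ∉ q := List.count_eq_zero.mp hq
  have hall : ∀ b ∈ q, true = b := by
    intro b hb
    cases b with
    | false => exact absurd hb hmem
    | true => rfl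
  exact List.count_eq_length.mpr hall

/-- Once a `d` move has been made, an `α`-sorted search whose final diagonal is
below `α + 2` makes no further `D` moves. -/
lemma LDS.no_false_after {h α : ℕ} (L : LDS h) {K : ℕ∞} (hK0 : 0 < K)
    (hKt : K ≠ ⊤) (hsorted : AlphaSorted h α L) :
    ∀ r c, 3 ≤ c → r + c ≤ h + 3 → L.Inv K c (r + c) →
      L.val (r + 1) (c - 1) < K →
      ∀ s, s + (searchPath L.val K r c).count false + 1 = r + c → s < α + 2 →
        (searchPath L.val K r c).count false = 0 := by
  intro r
  induction r with
  | zero => intro c _ _ _ _ s _ _; simp [searchPath]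
  | succ r ih =>
    intro c hc hrc hinv hP s hseq hsα
    by_cases hstop : L.val (r + 1) c = K ∨ L.val (r + 1) c = 0
    · rw [searchPath, if_pos hstop]; rfl
    · have hvK : L.val (r + 1) c ≠ K := fun e => hstop (Or.inl e)
      have hv0 : L.val (r + 1) c ≠ 0 := fun e => hstop (Or.inr e)
      have hr1 : 1 ≤ r := by
        by_contra hcon
        have hr : r = 0 := by omega
        subst hr
        exact hv0 (L.row_one c)
      by_cases hlt : L.val (r + 1) c < K
      · -- a `d` move: recurse at `(r, c+1)`
        have hinv' : L.Inv K (c + 1) (r + (c + 1)) := by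
          have := L.inv_true (show 2 ≤ c by omega) hrc hlt hinv
          rwa [show r + 1 + c = r + (c + 1) by omega] at this
        have hq := ih (c + 1) (by omega) (by omega) hinv'
          (by simpa using hlt) s
          (by rw [searchPath, if_neg hstop, if_pos hlt] at hseq
              simp [List.count_cons] at hseq
              omega) hsα
        rw [searchPath, if_neg hstop, if_pos hlt]
        simpa [List.count_cons] using hq
      · -- a `D` move at `(r + 1, c)`; derive a contradiction
        exfalso
        have hgt : K < L.val (r + 1) c := lt_of_le_of_ne (not_lt.mp hlt) hvK.symm
        have hinv' : L.Inv K c (r + c) := by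
          obtain ⟨r0, c0, a1, a2, a3, a4⟩ :=
            L.inv_false (show 2 ≤ c by omega) hrc hKt hgt hinv
          exact ⟨r0, c0, a1, a2, by omega, a4⟩
        have hP' : L.val (r + 1) (c - 1) < K := by
          rcases Nat.lt_or_ge r 1 with h' | h'
          · have hr : r = 0 := by omega
            subst hr
            rw [L.row_one]
            exact hK0
          · have := L.col_mono (r + 1) (c - 1) (by omega) (by omega) (by omega)
            exact this.trans hP
        have hq0 : (searchPath L.val K r c).count false = 0 := by
          refine ih c hc (by omega) hinv' hP' s ?_ hsα
          rw [searchPath, if_neg hstop, if_neg hlt] at hseq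
          simp only [List.count_cons_self] at hseq
          omega
        -- the search from `(r, c)` finds `K` on diagonal `s`
        obtain ⟨g1, g2, g3⟩ := L.search_finds hK0 hKt r c hr1 (by omega)
          (by omega) hinv'
        set q := searchPath L.val K r c with hqdef
        have hs' : s = r + c - 1 := by
          rw [searchPath, if_neg hstop, if_neg hlt] at hseq
          simp only [← hqdef, List.count_cons_self] at hseq
          omega
        have hct : q.count true = q.length := count_true_eq_length hq0
        set m := q.length with hm
        rw [hct] at g3
        -- `K` is the value of cell `(r - m, c + m)` on diagonal `s`
        -- Chain A: `K ≤ val 2 (r + c - 2)`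
        have hchainA : L.val (r - m) (c + m) ≤ L.val 2 (r + c - 2) := by
          have := L.diag_chain (r - m - 2) 2 (c + m) (le_refl 2) (by omega)
            (by omega)
            (by rw [show c + m + (r - m - 2) = r + c - 2 by omega]
                exact L.proper_inner 2 (r + c - 2) (le_refl 2) (by omega)
                  (by omega))
          rw [show 2 + (r - m - 2) = r - m by omega,
            show c + m + (r - m - 2) = r + c - 2 by omega] at this
          exact this
        -- sortedness between diagonals `r + c - 1` and `r + c`
        have hsort : L.val 2 (r + c - 2) < L.val (r + c - 1) 2 := by
          have := hsorted (r + c) (by omega) (by omega)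
          rw [show r + c - 2 = r + c - 2 by omega] at this
          simpa using this
        -- Chain B: `val (r + c - 1) 2 ≤ val (r + 2) (c - 1)`
        have hchainB : L.val (r + c - 1) 2 ≤ L.val (r + 2) (c - 1) := by
          have := L.diag_chain (c - 3) (r + 2) 2 (by omega) (le_refl 2)
            (by omega)
            (by rw [show 2 + (c - 3) = c - 1 by omega]
                exact ne_top_of_lt hP)
          rw [show r + 2 + (c - 3) = r + c - 1 by omega,
            show 2 + (c - 3) = c - 1 by omega] at this
          exact this
        rw [g3] at hchainA
        exact absurd ((hchainA.trans_lt hsort).trans_le hchainB) (not_lt.mpr hP.le)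

/-- Structure of the search path of a present key ending below diagonal
`α + 2` in an `α`-sorted lattice: some `D` moves followed by some `d` moves. -/
lemma LDS.structure_lemma {h α : ℕ} (L : LDS h) {K : ℕ∞} (hK0 : 0 < K)
    (hKt : K ≠ ⊤) (hsorted : AlphaSorted h α L) :
    ∀ r c, 2 ≤ c → r + c ≤ h + 3 → L.Inv K c (r + c) →
      ∀ s, s + (searchPath L.val K r c).count false + 1 = r + c → s < α + 2 →
        ∃ a b, searchPath L.val K r c
          = List.replicate a false ++ List.replicate b true := by
  intro r
  induction r with
  | zero => intro c _ _ _ s _ _; exact ⟨0, 0, rfl⟩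
  | succ r ih =>
    intro c hc hrc hinv s hseq hsα
    by_cases hstop : L.val (r + 1) c = K ∨ L.val (r + 1) c = 0
    · rw [searchPath, if_pos hstop]; exact ⟨0, 0, rfl⟩
    · have hvK : L.val (r + 1) c ≠ K := fun e => hstop (Or.inl e)
      have hv0 : L.val (r + 1) c ≠ 0 := fun e => hstop (Or.inr e)
      by_cases hlt : L.val (r + 1) c < K
      · -- first `d` move: the rest of the path is all `d`s
        have hinv' : L.Inv K (c + 1) (r + (c + 1)) := by
          have := L.inv_true hc hrc hlt hinv
          rwa [show r + 1 + c = r + (c + 1) by omega] at this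
        have hq0 : (searchPath L.val K r (c + 1)).count false = 0 := by
          refine L.no_false_after hK0 hKt hsorted r (c + 1) (by omega)
            (by omega) hinv' (by simpa using hlt) s ?_ hsα
          rw [searchPath, if_neg hstop, if_pos hlt] at hseq
          simp [List.count_cons] at hseq
          omega
        have hrep : searchPath L.val K r (c + 1)
            = List.replicate (searchPath L.val K r (c + 1)).length true := by
          refine List.eq_replicate_length.mpr ?_
          intro b hb
          cases b with
          | true => rfl
          | false => exact absurd hb (List.count_eq_zero.mp hq0)
        rw [searchPath, if_neg hstop, if_pos hlt]
        exact ⟨0, (searchPath L.val K r (c + 1)).length + 1,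
          by rw [List.replicate_zero, List.nil_append, List.replicate_succ,
            ← hrep]⟩
      · have hgt : K < L.val (r + 1) c := lt_of_le_of_ne (not_lt.mp hlt) hvK.symm
        have hinv' : L.Inv K c (r + c) := by
          obtain ⟨r0, c0, a1, a2, a3, a4⟩ := L.inv_false hc hrc hKt hgt hinv
          exact ⟨r0, c0, a1, a2, by omega, a4⟩
        obtain ⟨a, b, hab⟩ := ih c hc (by omega) hinv' s
          (by rw [searchPath, if_neg hstop, if_neg hlt] at hseq
              simp [List.count_cons] at hseq
              omega) hsα
        rw [searchPath, if_neg hstop, if_neg hlt, hab]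
        exact ⟨a + 1, b, by rw [List.replicate_succ, List.cons_append]⟩

/-- When searching for `⊤`, no `D` moves are ever made. -/
lemma count_false_top (val : ℕ → ℕ → ℕ∞) :
    ∀ r c, (searchPath val ⊤ r c).count false = 0 := by
  intro r
  induction r with
  | zero => intro c; rfl
  | succ r ih =>
    intro c
    rw [searchPath]
    split_ifs with h1 h2
    · rfl
    · simp [List.count_cons, ih]
    · exfalso
      apply h2
      refine lt_top_iff_ne_top.mpr fun e => h1 (Or.inl e)

lemma numRuns_cons_cons_same (x : Bool) (l : List Bool) :
    numRuns (x :: x :: l) = numRuns (x :: l) := by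
  simp [numRuns, List.destutter_cons_cons, List.destutter_cons']

lemma numRuns_cons_replicate (n : ℕ) (x : Bool) :
    numRuns (x :: List.replicate n x) = 1 := by
  induction n with
  | zero => simp [numRuns]
  | succ n ih => rw [List.replicate_succ, numRuns_cons_cons_same]; exact ih

lemma numRuns_le_two (a b : ℕ) :
    numRuns (List.replicate a false ++ List.replicate b true) ≤ 2 := by
  induction a with
  | zero =>
    simp only [List.replicate_zero, List.nil_append]
    cases b with
    | zero => simp [numRuns]
    | succ b => rw [List.replicate_succ, numRuns_cons_replicate]; omega
  | succ a ih =>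
    cases a with
    | zero =>
      simp only [List.replicate_succ, List.replicate_zero, List.cons_append,
        List.nil_append]
      cases b with
      | zero => simp [numRuns]
      | succ b =>
        rw [List.replicate_succ]
        have : numRuns (false :: true :: List.replicate b true)
            = 1 + numRuns (true :: List.replicate b true) := by
          simp [numRuns, List.destutter_cons_cons, List.destutter_cons']
          omega
        rw [this, numRuns_cons_replicate]
    | succ a' =>
      rw [List.replicate_succ, List.cons_append, List.replicate_succ,
        List.cons_append, numRuns_cons_cons_same, ← List.cons_append,
        ← List.replicate_succ]
      exact ih

/-- If `L` is an `α`-sorted lattice (`3 ≤ α ≤ h`) and `K` is a present key whose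
search path ends on a diagonal `s < α + 2` (the search starts on diagonal
`h + 2` and each `D` movement decreases the diagonal by one, so the final
diagonal `s` satisfies `s + #D-movements = h + 2`), then the search path of
`K` has the form `D^a d^b`, and hence `J(K) ≤ 2`. -/
theorem alphaSorted_present_jump_factor (h α s : ℕ) (L : LDS h) (K : ℕ∞)
    (hα3 : 3 ≤ α) (hαh : α ≤ h) (hsorted : AlphaSorted h α L)
    (hK : Present h L K)
    (hs : s + (path h L K).count false = h + 2) (hsα : s < α + 2) :
    (∃ a b, path h L K = List.replicate a false ++ List.replicate b true) ∧
      numRuns (path h L K) ≤ 2 := by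
  by_cases hKt : K = ⊤
  · exfalso
    have h0 : (path h L K).count false = 0 := by
      rw [hKt]
      exact count_false_top L.val (h + 1) 2
    omega
  · obtain ⟨r0, c0, b1, b2, b3, b4⟩ := hK
    have hK0 : 0 < K := b4 ▸ L.pos r0 c0 b1 b2 b3
    have hinv : L.Inv K 2 ((h + 1) + 2) := ⟨r0, c0, b1, b2, by omega, b4⟩
    obtain ⟨a, b, hab⟩ := L.structure_lemma hK0 hKt hsorted (h + 1) 2
      (le_refl 2) (by omega) hinv s (by unfold path at hs; omega) hsα
    have hab' : path h L K = List.replicate a false ++ List.replicate b true := hab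
    exact ⟨⟨a, b, hab'⟩, by rw [hab']; exact numRuns_le_two a b⟩
end

section
/- Let L be an α-sorted lattice (3 ≤ α ≤ h). If K is an absent key whose search path ends on a diagonal s < α + 1, then the search path of K has one of the forms D^a, D^a d^b, D^a d^b D, or D^a d^b D d^c (a, b, c ≥ 1 where applicable), and hence J(K) ≤ 4. -/
open scoped Classical

section AuxList

lemma aux_destutter'_rep (x : Bool) (n : ℕ) (l : List Bool) :
    List.destutter' (· ≠ ·) x (List.replicate n x ++ l) = List.destutter' (· ≠ ·) x l := by
  induction n with
  | zero => rfl
  | succ n ih => simp [List.replicate_succ, List.destutter', ih]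

lemma aux_destutter'_ne (x y : Bool) (hxy : x ≠ y) (l : List Bool) :
    List.destutter' (· ≠ ·) x (y :: l) = x :: List.destutter' (· ≠ ·) y l := by
  simp [List.destutter', hxy]

lemma aux_numRuns_rep (a : ℕ) (ha : 1 ≤ a) (x : Bool) :
    numRuns (List.replicate a x) = 1 := by
  obtain ⟨a, rfl⟩ := Nat.exists_eq_add_of_le ha
  rw [add_comm, numRuns, List.replicate_succ, List.destutter]
  rw [show List.replicate a x = List.replicate a x ++ [] by simp, aux_destutter'_rep]
  rfl

lemma aux_numRuns_two (a b : ℕ) (ha : 1 ≤ a) (hb : 1 ≤ b) :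
    numRuns (List.replicate a false ++ List.replicate b true) = 2 := by
  obtain ⟨a, rfl⟩ := Nat.exists_eq_add_of_le ha
  obtain ⟨b, rfl⟩ := Nat.exists_eq_add_of_le hb
  rw [add_comm 1 a, add_comm 1 b, numRuns, List.replicate_succ, List.cons_append,
    List.destutter, aux_destutter'_rep, List.replicate_succ,
    aux_destutter'_ne false true (by decide),
    show List.replicate b true = List.replicate b true ++ [] by simp, aux_destutter'_rep]
  rfl

lemma aux_numRuns_three (a b : ℕ) (ha : 1 ≤ a) (hb : 1 ≤ b) :
    numRuns (List.replicate a false ++ List.replicate b true ++ [false]) = 3 := by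
  obtain ⟨a, rfl⟩ := Nat.exists_eq_add_of_le ha
  obtain ⟨b, rfl⟩ := Nat.exists_eq_add_of_le hb
  rw [add_comm 1 a, add_comm 1 b, numRuns, List.append_assoc, List.replicate_succ,
    List.cons_append, List.destutter, aux_destutter'_rep, List.replicate_succ,
    List.cons_append, aux_destutter'_ne false true (by decide), aux_destutter'_rep,
    aux_destutter'_ne true false (by decide)]
  rfl

lemma aux_numRuns_four (a b c : ℕ) (ha : 1 ≤ a) (hb : 1 ≤ b) (hc : 1 ≤ c) :
    numRuns (List.replicate a false ++ List.replicate b true ++ [false] ++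
      List.replicate c true) = 4 := by
  obtain ⟨a, rfl⟩ := Nat.exists_eq_add_of_le ha
  obtain ⟨b, rfl⟩ := Nat.exists_eq_add_of_le hb
  obtain ⟨c, rfl⟩ := Nat.exists_eq_add_of_le hc
  rw [add_comm 1 a, add_comm 1 b, add_comm 1 c, numRuns, List.append_assoc,
    List.append_assoc, List.replicate_succ, List.cons_append,
    List.destutter, aux_destutter'_rep, List.replicate_succ, List.cons_append,
    aux_destutter'_ne false true (by decide), aux_destutter'_rep, List.singleton_append,
    aux_destutter'_ne true false (by decide), List.replicate_succ,
    aux_destutter'_ne false true (by decide),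
    show List.replicate c true = List.replicate c true ++ [] by simp, aux_destutter'_rep]
  rfl

end AuxList

section AuxSearch

variable (val : ℕ → ℕ → ℕ∞) (K : ℕ∞)

lemma aux_step_d (r c : ℕ) (h1 : 0 < val (r+1) c) (h2 : val (r+1) c < K) :
    searchPath val K (r+1) c = true :: searchPath val K r (c+1) := by
  rw [searchPath, if_neg, if_pos h2]
  push_neg
  exact ⟨h2.ne, h1.ne'⟩

lemma aux_step_D (hK0 : 0 < K) (r c : ℕ) (h2 : K < val (r+1) c) :
    searchPath val K (r+1) c = false :: searchPath val K r c := by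
  rw [searchPath, if_neg, if_neg (by exact not_lt.2 h2.le)]
  push_neg
  exact ⟨h2.ne', (lt_trans hK0 h2).ne'⟩

lemma aux_all_d (hrow1 : ∀ c, val 1 c = 0) :
    ∀ r c, (∀ r' c', r' + c' = (r + 1) + c → 2 ≤ r' → c ≤ c' →
        0 < val r' c' ∧ val r' c' < K) →
    searchPath val K (r + 1) c = List.replicate r true := by
  intro r
  induction r with
  | zero =>
    intro c _
    rw [searchPath, if_pos (Or.inr (hrow1 c))]
    rfl
  | succ r ih =>
    intro c hcells
    have h0 := hcells (r + 2) c (by omega) (by omega) le_rfl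
    rw [aux_step_d val K _ _ h0.1 h0.2,
      ih (c+1) fun r' c' hsum hr' hc' => hcells r' c' (by omega) hr' (by omega),
      List.replicate_succ]

lemma aux_prefix_D (hK0 : 0 < K) :
    ∀ a r c, (∀ r', r < r' → r' ≤ r + a → K < val r' c) →
    searchPath val K (r + a) c = List.replicate a false ++ searchPath val K r c := by
  intro a
  induction a with
  | zero => intro r c _; rfl
  | succ a ih =>
    intro r c hcells
    have e : r + (a + 1) = (r + a) + 1 := by omega
    rw [e, aux_step_D val K hK0 _ _ (hcells (r + a + 1) (by omega) (by omega)),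
      ih r c fun r' h1 h2 => hcells r' h1 (by omega), List.replicate_succ]
    rfl

lemma aux_prefix_d :
    ∀ b r c, (∀ r' c', r' + c' = (r + b) + c → r < r' → c ≤ c' →
        0 < val r' c' ∧ val r' c' < K) →
    searchPath val K (r + b) c = List.replicate b true ++ searchPath val K r (c + b) := by
  intro b
  induction b with
  | zero => intro r c _; rfl
  | succ b ih =>
    intro r c hcells
    have e : r + (b + 1) = (r + b) + 1 := by omega
    have h0 := hcells (r + b + 1) c (by omega) (by omega) le_rfl
    rw [e, aux_step_d val K _ _ h0.1 h0.2,
      ih r (c + 1) fun r' c' hsum h1 h2 => hcells r' c' (by omega) h1 (by omega),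
      List.replicate_succ]
    have e2 : c + (b + 1) = (c + 1) + b := by omega
    rw [e2]
    rfl

lemma aux_count_false (hrow1 : ∀ c, val 1 c = 0) (m : ℕ)
    (hreg : ∀ r c, 2 ≤ r → 2 ≤ c → r + c ≤ m → val r c < K) :
    ∀ r c, 2 ≤ c → (searchPath val K r c).count false + m ≤ r + c ∨
      (searchPath val K r c).count false = 0 := by
  intro r
  induction r with
  | zero => intro c _; right; simp [searchPath]
  | succ r ih =>
    intro c hc
    rw [searchPath]
    split
    · right; simp
    · rename_i hne
      push_neg at hne
      split
      · rename_i hlt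
        rcases ih (c+1) (by omega) with h | h
        · left
          simp only [List.count_cons, beq_iff_eq, if_neg (by decide : ¬ (true = false))]
          omega
        · right
          simp only [List.count_cons, beq_iff_eq, if_neg (by decide : ¬ (true = false)), h]
      · rename_i hnlt
        have hgt : K < val (r+1) c := lt_of_le_of_ne (not_lt.1 hnlt) (Ne.symm hne.1)
        have hrow : 2 ≤ r + 1 := by
          rcases Nat.lt_or_ge r 1 with h1 | h1
          · interval_cases r
            exact absurd (hrow1 c) hne.2
          · omega
        have hsum : ¬ (r + 1 + c ≤ m) := fun hle =>
          absurd (hreg (r+1) c hrow hc hle) (not_lt.2 hgt.le)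
        left
        rcases ih c hc with h | h <;>
          simp [List.count_cons] <;> omega

end AuxSearch

section AuxChains

variable {h : ℕ} (L : LDS h)

lemma aux_col_chain : ∀ r r', 2 ≤ r → r ≤ r' → r' ≤ h + 1 →
    L.val r 2 ≤ L.val r' 2 := by
  intro r r' h2 hle
  induction r' with
  | zero => omega
  | succ r' ih =>
    intro hb
    rcases Nat.eq_or_lt_of_le hle with he | hlt
    · rw [he]
    · exact le_trans (ih (by omega) (by omega))
        (L.col_mono r' 2 (by omega) le_rfl (by omega)).le

lemma aux_row2_chain : ∀ c c', 2 ≤ c → c ≤ c' → c' ≤ h + 1 →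
    L.val 2 c ≤ L.val 2 c' := by
  intro c c' h2 hle
  induction c' with
  | zero => omega
  | succ c' ih =>
    intro hb
    rcases Nat.eq_or_lt_of_le hle with he | hlt
    · rw [he]
    · exact le_trans (ih (by omega) (by omega))
        (L.row_mono 2 c' le_rfl (by omega) (by omega)).le

lemma aux_diag_chain : ∀ n c, 2 ≤ c → n + c ≤ h → L.val (n + 2) c ≤ L.val 2 (n + c) := by
  intro n
  induction n with
  | zero => intro c h2 _; simp
  | succ n ih =>
    intro c h2 hb
    have hproper : L.val (n + 2) (c + 1) ≠ ⊤ :=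
      L.proper_inner (n + 2) (c + 1) (by omega) (by omega) (by omega)
    have hstep : L.val (n + 3) c < L.val (n + 2) (c + 1) := by
      have := L.diag_mono (n + 3) c (by omega) h2 (by omega)
        (by rw [show n + 3 - 1 = n + 2 by omega]; exact hproper)
      rwa [show n + 3 - 1 = n + 2 by omega] at this
    calc L.val (n + 1 + 2) c = L.val (n + 3) c := by norm_num
      _ ≤ L.val (n + 2) (c + 1) := hstep.le
      _ ≤ L.val 2 (n + (c + 1)) := ih (c + 1) (by omega) (by omega)
      _ = L.val 2 (n + 1 + c) := by rw [show n + (c + 1) = n + 1 + c by omega]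

end AuxChains

/-- If `L` is an `α`-sorted lattice (`3 ≤ α ≤ h`) and `K` is an absent key of
the search space whose search path ends on a diagonal `s < α + 1`, then the
search path of `K` has one of the forms `D^a`, `D^a d^b`, `D^a d^b D`, or
`D^a d^b D d^c` (with `a, b, c ≥ 1` where applicable), and hence `J(K) ≤ 4`. -/
theorem alphaSorted_absent_jump_factor (h α s : ℕ) (L : LDS h) (K : ℕ∞)
    (hα3 : 3 ≤ α) (hαh : α ≤ h) (hsorted : AlphaSorted h α L)
    (hK : InSearchSpace K) (habs : ¬ Present h L K)
    (hs : s + (path h L K).count false = h + 2) (hsα : s < α + 1) :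
    ((∃ a, path h L K = List.replicate a false) ∨
     (∃ a b, 1 ≤ a ∧ 1 ≤ b ∧
        path h L K = List.replicate a false ++ List.replicate b true) ∨
     (∃ a b, 1 ≤ a ∧ 1 ≤ b ∧
        path h L K = List.replicate a false ++ List.replicate b true ++ [false]) ∨
     (∃ a b c, 1 ≤ a ∧ 1 ≤ b ∧ 1 ≤ c ∧
        path h L K = List.replicate a false ++ List.replicate b true ++ [false] ++
          List.replicate c true)) ∧
      numRuns (path h L K) ≤ 4 := by
  have hK0 : 0 < K := hK.1
  have hrow1 : ∀ c, L.val 1 c = 0 := L.row_one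
  have hKne : ∀ r c, 2 ≤ r → 2 ≤ c → r + c ≤ h + 3 → L.val r c ≠ K :=
    fun r c h1 h2 h3 heq => habs ⟨r, c, h1, h2, h3, heq⟩
  -- the key sorting fact at the top of the sorted region
  have hsort_top : L.val 2 α < L.val (α + 1) 2 := by
    have hst := hsorted (α + 2) (by omega) le_rfl
    rwa [show α + 2 - 2 = α by omega, show α + 2 - 1 = α + 1 by omega] at hst
  -- K is below the last proper key of diagonal α+1
  have hKsmall : K < L.val 2 α := by
    rcases lt_or_gt_of_ne (hKne 2 α le_rfl (by omega) (by omega)).symm with hlt | hgt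
    · exact hlt
    · -- impossible: then the whole region of diagonals ≤ α+1 is below K and the
      -- search makes too few D moves
      exfalso
      have hreg : ∀ r c, 2 ≤ r → 2 ≤ c → r + c ≤ α + 2 → L.val r c < K := by
        intro r c h1 h2 h3
        obtain ⟨k, rfl⟩ : ∃ k, r = k + 2 := ⟨r - 2, by omega⟩
        calc L.val (k + 2) c ≤ L.val 2 (k + c) := aux_diag_chain L k c h2 (by omega)
          _ ≤ L.val 2 α := aux_row2_chain L (k + c) α (by omega) (by omega) (by omega)
          _ < K := hgt
      rcases aux_count_false L.val K hrow1 (α + 2) hreg (h + 1) 2 le_rfl with hcf | hcf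
      · rw [← path] at hcf; omega
      · rw [← path] at hcf; omega
  -- hence K is below every key of column 2 from row α+1 up
  have hcol_high : ∀ r', α + 1 ≤ r' → r' ≤ h + 1 → K < L.val r' 2 := by
    intro r' h1 h2
    exact lt_of_lt_of_le (lt_trans hKsmall hsort_top)
      (aux_col_chain L (α + 1) r' (by omega) h1 h2)
  by_cases h22 : K < L.val 2 2
  · -- Form 1 : all-D path
    have hcells : ∀ r', 1 < r' → r' ≤ 1 + h → K < L.val r' 2 := by
      intro r' h1 h2
      exact lt_of_lt_of_le h22 (aux_col_chain L 2 r' le_rfl (by omega) (by omega))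
    have hpath : path h L K = List.replicate h false := by
      rw [path, show h + 1 = 1 + h by omega,
        aux_prefix_D L.val K hK0 h 1 2 hcells, searchPath,
        if_pos (Or.inr (hrow1 2)), List.append_nil]
    refine ⟨Or.inl ⟨h, hpath⟩, ?_⟩
    rw [hpath, aux_numRuns_rep h (by omega) false]
    omega
  · have h22' : L.val 2 2 < K :=
      lt_of_le_of_ne (not_lt.1 h22) (hKne 2 2 le_rfl le_rfl (by omega))
    -- r0 : the last row of column 2 whose key is below K
    set P : ℕ → Prop := fun r => L.val r 2 < K with hP
    set r0 : ℕ := Nat.findGreatest P α with hr0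
    have hr0ge2 : 2 ≤ r0 := by
      rw [hr0]; exact Nat.le_findGreatest (by omega) h22'
    have hr0le : r0 ≤ α := by rw [hr0]; exact Nat.findGreatest_le α
    have hr0P : L.val r0 2 < K := by
      have hsp := Nat.findGreatest_spec (P := P) (m := 2) (n := α) (by omega) h22'
      rwa [← hr0] at hsp
    have hgtcol : ∀ r', r0 < r' → r' ≤ h + 1 → K < L.val r' 2 := by
      intro r' h1 h2
      rcases le_or_gt r' α with h3 | h3
      · have hnp : ¬ P r' := Nat.findGreatest_is_greatest (by omega : Nat.findGreatest P α < r') h3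
        exact lt_of_le_of_ne (not_lt.1 hnp)
          (hKne r' 2 (by omega) le_rfl (by omega)).symm
      · exact hcol_high r' (by omega) h2
    -- initial D-run of length a = h+1-r0 ≥ 1
    have ha1 : 1 ≤ h + 1 - r0 := by omega
    have hDrun : path h L K =
        List.replicate (h + 1 - r0) false ++ searchPath L.val K r0 2 := by
      have hx := aux_prefix_D L.val K hK0 (h + 1 - r0) r0 2
        (fun r' h1 h2 => hgtcol r' h1 (by omega))
      rw [show r0 + (h + 1 - r0) = h + 1 by omega] at hx
      exact hx
    by_cases hblock : ∀ r' c', r' + c' = r0 + 2 → 2 ≤ r' → 2 ≤ c' → L.val r' c' < K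
    · -- Form 2 : D^a d^b
      have hall : searchPath L.val K r0 2 = List.replicate (r0 - 1) true := by
        rw [show r0 = (r0 - 1) + 1 by omega]
        refine aux_all_d L.val K hrow1 (r0 - 1) 2 ?_
        intro r' c' hsum h1 h2
        refine ⟨L.pos r' c' h1 h2 (by omega), hblock r' c' (by omega) h1 h2⟩
      have hpath : path h L K = List.replicate (h + 1 - r0) false ++
          List.replicate (r0 - 1) true := by rw [hDrun, hall]
      refine ⟨Or.inr (Or.inl ⟨h + 1 - r0, r0 - 1, ha1, by omega, hpath⟩), ?_⟩
      rw [hpath, aux_numRuns_two _ _ ha1 (by omega)]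
      omega
    · -- there is a blocking cell on diagonal r0+1
      push_neg at hblock
      obtain ⟨r', c', hsum', h1', h2', hnlt'⟩ := hblock
      have hQex : ∃ c1, 2 ≤ c1 ∧ c1 ≤ r0 ∧ K < L.val (r0 + 2 - c1) c1 := by
        refine ⟨c', h2', by omega, ?_⟩
        rw [show r0 + 2 - c' = r' by omega]
        exact lt_of_le_of_ne hnlt' (hKne r' c' h1' h2' (by omega)).symm
      set c1 : ℕ := Nat.find hQex with hc1def
      obtain ⟨hc1ge2, hc1ler0, hc1blk⟩ := Nat.find_spec hQex
      rw [← hc1def] at hc1ge2 hc1ler0 hc1blk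
      have hc1ge3 : 3 ≤ c1 := by
        rcases Nat.lt_or_ge c1 3 with hlt | hge
        · exfalso
          have : c1 = 2 := by omega
          rw [this, show r0 + 2 - 2 = r0 by omega] at hc1blk
          exact absurd hr0P (not_lt.2 hc1blk.le)
        · exact hge
      have hmin : ∀ c'', 2 ≤ c'' → c'' < c1 → L.val (r0 + 2 - c'') c'' < K := by
        intro c'' hge hlt
        have hnq := Nat.find_min hQex hlt
        push_neg at hnq
        have hnlt := hnq hge (by omega)
        exact lt_of_le_of_ne hnlt
          (hKne (r0 + 2 - c'') c'' (by omega) hge (by omega))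
      -- d-run of length b = c1 - 2 on diagonal r0+1, then a D move
      set b : ℕ := c1 - 2 with hbdef
      set r1 : ℕ := r0 + 2 - c1 with hr1def
      have hr1ge2 : 2 ≤ r1 := by omega
      have hdrun : searchPath L.val K r0 2 =
          List.replicate b true ++ searchPath L.val K r1 (2 + b) := by
        rw [show r0 = r1 + b by omega]
        refine aux_prefix_d L.val K b r1 2 ?_
        intro rr cc hsum h1 h2
        have hcc : cc < c1 := by omega
        have := hmin cc h2 hcc
        rw [show r0 + 2 - cc = rr by omega] at this
        exact ⟨L.pos rr cc (by omega) h2 (by omega), this⟩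
      have h2b : 2 + b = c1 := by omega
      have hstepD : searchPath L.val K r1 c1 =
          false :: searchPath L.val K (r1 - 1) c1 := by
        rw [show r1 = (r1 - 1) + 1 by omega]
        refine aux_step_D L.val K hK0 (r1 - 1) c1 ?_
        rw [show r1 - 1 + 1 = r0 + 2 - c1 by omega]
        exact hc1blk
      rcases Nat.eq_or_lt_of_le hr1ge2 with hr1eq | hr1gt
      · -- Form 3 : D^a d^b D
        have hend : searchPath L.val K (r1 - 1) c1 = [] := by
          rw [show r1 - 1 = 1 by omega, searchPath, if_pos (Or.inr (hrow1 c1))]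
        have hpath : path h L K = List.replicate (h + 1 - r0) false ++
            List.replicate b true ++ [false] := by
          rw [hDrun, hdrun, h2b, hstepD, hend, List.append_assoc]
        refine ⟨Or.inr (Or.inr (Or.inl ⟨h + 1 - r0, b, ha1, by omega, hpath⟩)), ?_⟩
        rw [hpath, aux_numRuns_three _ _ ha1 (by omega)]
        omega
      · -- Form 4 : D^a d^b D d^c
        have hr0ge3 : 3 ≤ r0 := by omega
        have hsort_r0 : L.val 2 (r0 - 1) < L.val r0 2 := by
          have hst := hsorted (r0 + 1) (by omega) (by omega)
          rwa [show r0 + 1 - 2 = r0 - 1 by omega, show r0 + 1 - 1 = r0 by omega] at hst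
        have htail : searchPath L.val K (r1 - 1) c1 =
            List.replicate (r1 - 2) true := by
          rw [show r1 - 1 = (r1 - 2) + 1 by omega]
          refine aux_all_d L.val K hrow1 (r1 - 2) c1 ?_
          intro rr cc hsum h1 h2
          have hsum2 : rr + cc = r0 + 1 := by omega
          refine ⟨L.pos rr cc h1 (by omega) (by omega), ?_⟩
          obtain ⟨k, rfl⟩ : ∃ k, rr = k + 2 := ⟨rr - 2, by omega⟩
          calc L.val (k + 2) cc ≤ L.val 2 (k + cc) :=
                aux_diag_chain L k cc (by omega) (by omega)
            _ = L.val 2 (r0 - 1) := by rw [show k + cc = r0 - 1 by omega]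
            _ < L.val r0 2 := hsort_r0
            _ < K := hr0P
        have hpath : path h L K = List.replicate (h + 1 - r0) false ++
            List.replicate b true ++ [false] ++ List.replicate (r1 - 2) true := by
          rw [hDrun, hdrun, h2b, hstepD, htail]
          simp [List.append_assoc]
        refine ⟨Or.inr (Or.inr (Or.inr
          ⟨h + 1 - r0, b, r1 - 2, ha1, by omega, by omega, hpath⟩)), ?_⟩
        rw [hpath, aux_numRuns_four _ _ _ ha1 (by omega) (by omega)]
end
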